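/- Define F(x) = ((x+1)/2)A(1) − A(x) − (x/2) log x for x ∈ (0,1), where A(λ) = ∫_0^∞ {t}{λt}/t² dt. Then F is bounded on (0,1) and F(x) = A(1)/2 + O(x log(1/x) + x) as x → 0⁺; in particular lim_{x→0⁺} F(x) = A(1)/2. -/

import Mathlib

open MeasureTheory Filter Asymptotics Set

/-- `A(λ) = ∫_0^∞ {t}{λt}/t² dt`. -/
noncomputable def Afn (l : ℝ) : ℝ :=
  ∫ t in Set.Ioi (0:ℝ), Int.fract t * Int.fract (l * t) / t ^ 2

lemma fract_le_self' {y : ℝ} (hy : 0 ≤ y) : Int.fract y ≤ y := by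
  have h : (0:ℝ) ≤ (⌊y⌋ : ℝ) := by exact_mod_cast Int.floor_nonneg.mpr hy
  rw [Int.fract]; linarith

lemma afn_nonneg (x : ℝ) : 0 ≤ Afn x := by
  apply setIntegral_nonneg measurableSet_Ioi
  intro t _
  exact div_nonneg (mul_nonneg (Int.fract_nonneg _) (Int.fract_nonneg _)) (sq_nonneg t)

lemma afn_le {x : ℝ} (hx : x ∈ Set.Ioo (0:ℝ) 1) : Afn x ≤ x * Real.log (1/x) + 2 * x := by
  obtain ⟨hx0, hx1⟩ := hx
  have hlog : 0 ≤ Real.log (1/x) := Real.log_nonneg (by rw [le_div_iff₀ hx0]; linarith)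
  set f : ℝ → ℝ := fun t => Int.fract t * Int.fract (x * t) / t ^ 2 with hf
  by_cases hint : IntegrableOn f (Ioi 0) volume
  · set b : ℝ := 1/x with hbdef
    have hb1 : 1 < b := by rw [hbdef, lt_div_iff₀ hx0]; linarith
    have hb0 : 0 < b := by linarith
    -- pointwise bounds
    have key1 : ∀ t ∈ Ioc (0:ℝ) 1, f t ≤ x := by
      intro t ⟨ht0, _⟩
      have h1 : Int.fract t * Int.fract (x * t) ≤ t * (x * t) :=
        mul_le_mul (fract_le_self' ht0.le) (fract_le_self' (by positivity))
          (Int.fract_nonneg _) ht0.le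
      have : f t ≤ t * (x * t) / t ^ 2 := by
        apply div_le_div_of_nonneg_right h1 (by positivity)
      calc f t ≤ t * (x * t) / t ^ 2 := this
        _ = x := by field_simp
    have key2 : ∀ t ∈ Ioc (1:ℝ) b, f t ≤ x * (1/t) := by
      intro t ⟨ht1, _⟩
      have ht0 : (0:ℝ) < t := by linarith
      have h1 : Int.fract t * Int.fract (x * t) ≤ 1 * (x * t) :=
        mul_le_mul (Int.fract_lt_one t).le (fract_le_self' (by positivity))
          (Int.fract_nonneg _) zero_le_one
      calc f t ≤ 1 * (x * t) / t ^ 2 := div_le_div_of_nonneg_right h1 (by positivity)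
        _ = x * (1/t) := by field_simp
    have key3 : ∀ t ∈ Ioi b, f t ≤ t ^ (-2:ℝ) := by
      intro t ht
      have ht0 : (0:ℝ) < t := lt_trans hb0 ht
      have h1 : Int.fract t * Int.fract (x * t) ≤ 1 * 1 :=
        mul_le_mul (Int.fract_lt_one t).le (Int.fract_lt_one _).le
          (Int.fract_nonneg _) zero_le_one
      calc f t ≤ 1 * 1 / t ^ 2 := div_le_div_of_nonneg_right h1 (by positivity)
        _ = t ^ (-2:ℝ) := by
            rw [Real.rpow_neg ht0.le, Real.rpow_two]
            field_simp
    -- splitting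
    have hsplit1 : Ioi (0:ℝ) = Ioc 0 b ∪ Ioi b := (Ioc_union_Ioi_eq_Ioi hb0.le).symm
    have hsplit2 : Ioc (0:ℝ) b = Ioc 0 1 ∪ Ioc 1 b := (Ioc_union_Ioc_eq_Ioc zero_le_one hb1.le).symm
    have hi1 : IntegrableOn f (Ioc 0 1) volume := hint.mono_set (Ioc_subset_Ioi_self)
    have hi2 : IntegrableOn f (Ioc 1 b) volume :=
      hint.mono_set (fun t ⟨ht1, ht2⟩ => by simp; linarith)
    have hi3 : IntegrableOn f (Ioi b) volume :=
      hint.mono_set (fun t ht => by simp at *; linarith)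
    have heq : ∫ t in Ioi (0:ℝ), f t = (∫ t in Ioc (0:ℝ) 1, f t) + (∫ t in Ioc (1:ℝ) b, f t)
        + (∫ t in Ioi b, f t) := by
      rw [hsplit1, setIntegral_union (Ioc_disjoint_Ioi le_rfl) measurableSet_Ioi
        (hsplit2 ▸ (hi1.union hi2)) hi3, hsplit2,
        setIntegral_union (Ioc_disjoint_Ioc.mpr (by simp)) measurableSet_Ioc hi1 hi2]
    -- bound each
    have hb1' : ∫ t in Ioc (0:ℝ) 1, f t ≤ x := by
      have := setIntegral_mono_on hi1 ((integrableOn_const_iff).mpr (Or.inr measure_Ioc_lt_top))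
        measurableSet_Ioc key1
      simpa using this
    have hb2' : ∫ t in Ioc (1:ℝ) b, f t ≤ x * Real.log (1/x) := by
      have hg : IntegrableOn (fun t => x * (1/t)) (Ioc 1 b) volume := by
        apply (((continuousOn_const.div continuousOn_id (fun t ht => ?_)).const_smul x).integrableOn_Icc).mono_set Ioc_subset_Icc_self
        · rintro rfl; simp at ht; linarith [ht.1]
      have h2 := setIntegral_mono_on hi2 hg measurableSet_Ioc key2
      have hval : ∫ t in Ioc (1:ℝ) b, x * (1/t) = x * Real.log b := by
        rw [← intervalIntegral.integral_of_le hb1.le, intervalIntegral.integral_const_mul,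
          integral_one_div (by intro h; simp [Set.uIcc_of_le hb1.le] at h; linarith)]
        simp
      rw [hval] at h2
      exact h2
    have hb3' : ∫ t in Ioi b, f t ≤ x := by
      have h3 := setIntegral_mono_on hi3
        ((integrableOn_Ioi_rpow_of_lt (by norm_num) hb0)) measurableSet_Ioi key3
      rw [integral_Ioi_rpow_of_lt (by norm_num) hb0] at h3
      have : -b ^ (-2 + 1 : ℝ) / (-2 + 1) = x := by
        norm_num
        rw [Real.rpow_neg_one, hbdef]
        simp
      rwa [this] at h3
    have : Afn x = ∫ t in Ioi (0:ℝ), f t := rfl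
    rw [this, heq]; linarith
  · rw [Afn, integral_undef hint]
    nlinarith

/-- `F(x) = ((x+1)/2) A(1) - A(x) - (x/2) log x`. -/
noncomputable def Ffn (x : ℝ) : ℝ :=
  (x + 1) / 2 * Afn 1 - Afn x - x / 2 * Real.log x

lemma key_bound {x : ℝ} (hx : x ∈ Set.Ioo (0:ℝ) 1) :
    |Ffn x - Afn 1 / 2| ≤ (|Afn 1| + 4) * (x * Real.log (1/x) + x) := by
  obtain ⟨hx0, hx1⟩ := hx
  have hlog : 0 ≤ Real.log (1/x) := Real.log_nonneg (by rw [le_div_iff₀ hx0]; linarith)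
  have h1 : 0 ≤ Afn x := afn_nonneg x
  have h2 : Afn x ≤ x * Real.log (1/x) + 2 * x := afn_le ⟨hx0, hx1⟩
  have hlx : Real.log x = - Real.log (1/x) := by rw [one_div, Real.log_inv, neg_neg]
  have hA : Afn 1 ≤ |Afn 1| := le_abs_self _
  have hA' : -|Afn 1| ≤ Afn 1 := neg_abs_le _
  rw [Ffn, hlx, abs_le]
  constructor <;> nlinarith [mul_nonneg hx0.le hlog, abs_nonneg (Afn 1)]

/-- `F` is bounded on `(0,1)`, `F(x) = A(1)/2 + O(x log(1/x) + x)` as `x → 0⁺`,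
and `lim_{x→0⁺} F(x) = A(1)/2`. -/
theorem Ffn_bounded_and_asymptotic :
    (∃ M : ℝ, ∀ x ∈ Set.Ioo (0:ℝ) 1, |Ffn x| ≤ M) ∧
    (fun x : ℝ => Ffn x - Afn 1 / 2) =O[nhdsWithin 0 (Set.Ioi (0:ℝ))]
      (fun x : ℝ => x * Real.log (1 / x) + x) ∧
    Tendsto Ffn (nhdsWithin 0 (Set.Ioi (0:ℝ))) (nhds (Afn 1 / 2)) := by
  have hbig : (fun x : ℝ => Ffn x - Afn 1 / 2) =O[nhdsWithin 0 (Set.Ioi (0:ℝ))]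
      (fun x : ℝ => x * Real.log (1 / x) + x) := by
    rw [isBigO_iff]
    refine ⟨|Afn 1| + 4, ?_⟩
    filter_upwards [Ioo_mem_nhdsGT_of_mem (by simp : (0:ℝ) ∈ Ico (0:ℝ) 1)] with x hx
    have hlog : 0 ≤ Real.log (1/x) := Real.log_nonneg (by rw [le_div_iff₀ hx.1]; linarith [hx.2])
    have hg : 0 ≤ x * Real.log (1/x) + x := by nlinarith [hx.1.le]
    rw [Real.norm_eq_abs, Real.norm_eq_abs, abs_of_nonneg hg]
    exact key_bound hx
  have hgz : Tendsto (fun x : ℝ => x * Real.log (1 / x) + x)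
      (nhdsWithin 0 (Set.Ioi (0:ℝ))) (nhds 0) := by
    have heq : (fun x : ℝ => x * Real.log (1 / x) + x) = fun x => -(x * Real.log x) + x := by
      funext x; rw [one_div, Real.log_inv]; ring
    rw [heq]
    have : Tendsto (fun x : ℝ => -(x * Real.log x) + x) (nhds 0) (nhds (-(0 * Real.log 0) + 0)) :=
      (Real.continuous_mul_log.neg.add continuous_id).tendsto 0
    simpa using this.mono_left nhdsWithin_le_nhds
  have htend0 : Tendsto (fun x : ℝ => Ffn x - Afn 1 / 2)
      (nhdsWithin 0 (Set.Ioi (0:ℝ))) (nhds 0) := hbig.trans_tendsto hgz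
  refine ⟨⟨(|Afn 1| + 4) * 2 + |Afn 1| / 2, ?_⟩, hbig, ?_⟩
  · intro x hx
    have hlog : 0 ≤ Real.log (1/x) := Real.log_nonneg (by rw [le_div_iff₀ hx.1]; linarith [hx.2])
    have hx0 : (0:ℝ) < x := hx.1
    have hxl : x * Real.log (1/x) ≤ 1 := by
      have h' := Real.log_le_sub_one_of_pos (show (0:ℝ) < 1/x by positivity)
      have he : x * (1/x - 1) = 1 - x := by field_simp
      nlinarith
    have h := key_bound hx
    have hA : 0 ≤ |Afn 1| := abs_nonneg _
    have habs : |Ffn x| ≤ |Ffn x - Afn 1 / 2| + |Afn 1| / 2 := by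
      calc |Ffn x| = |(Ffn x - Afn 1 / 2) + Afn 1 / 2| := by ring_nf
        _ ≤ |Ffn x - Afn 1 / 2| + |Afn 1 / 2| := abs_add_le _ _
        _ = |Ffn x - Afn 1 / 2| + |Afn 1| / 2 := by rw [abs_div]; norm_num
    have hle2 : x * Real.log (1/x) + x ≤ 2 := by linarith [hx.2.le]
    have := mul_le_mul_of_nonneg_left hle2 (by linarith : (0:ℝ) ≤ |Afn 1| + 4)
    linarith
  · have := htend0.add_const (Afn 1 / 2)
    simpa using this
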